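/- Let z_1,…,z_d be complex numbers of modulus 1. Then the following are equivalent: (i) whenever c_1,…,c_d ∈ ℂ are such that the limit lim_{n→∞} (c_1 z_1^n + ⋯ + c_d z_d^n) exists, one has c_1 = ⋯ = c_d = 0; (ii) for every j ∈ {1,…,d}, z_j ≠ 1 and z_j ≠ z_k for all k ≠ j. -/

import Mathlib

open Filter Finset

-- averaged geometric sums tend to 0 when |w|=1, w ≠ 1
lemma avg_geom_zero (w : ℂ) (hw : ‖w‖ = 1) (hw1 : w ≠ 1) :
    Tendsto (fun N : ℕ => (N : ℝ)⁻¹ • ∑ n ∈ Finset.range N, w ^ n) atTop (nhds 0) := by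
  apply squeeze_zero_norm (a := fun N : ℕ => (N : ℝ)⁻¹ * (2 / ‖w - 1‖))
  · intro N
    rw [norm_smul, geom_sum_eq hw1, norm_div]
    have h1 : ‖w ^ N - 1‖ ≤ 2 := by
      calc ‖w ^ N - 1‖ ≤ ‖w ^ N‖ + ‖(1:ℂ)‖ := norm_sub_le _ _
      _ = 2 := by
        rw [norm_pow]
        simp [show ‖w‖ = 1 from hw]
        norm_num
    have h2 : (0:ℝ) < ‖w - 1‖ := by
      rw [norm_pos_iff]; exact sub_ne_zero.mpr hw1
    have : ‖w ^ N - 1‖ / ‖w - 1‖ ≤ 2 / ‖w - 1‖ := by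
      gcongr
    calc ‖(N:ℝ)⁻¹‖ * (‖w ^ N - 1‖ / ‖w - 1‖) ≤ ‖(N:ℝ)⁻¹‖ * (2 / ‖w - 1‖) := by
          exact mul_le_mul_of_nonneg_left this (norm_nonneg _)
      _ = (N:ℝ)⁻¹ * (2 / ‖w - 1‖) := by
          rw [Real.norm_eq_abs, abs_of_nonneg (by positivity)]
  · simpa using tendsto_inv_atTop_nhds_zero_nat.mul_const (2 / ‖w - 1‖)

lemma avg_geom_one :
    Tendsto (fun N : ℕ => (N : ℝ)⁻¹ • ∑ n ∈ Finset.range N, (1:ℂ) ^ n) atTop (nhds 1) := by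
  apply Tendsto.congr' _ (tendsto_const_nhds (x := (1:ℂ)))
  filter_upwards [eventually_ge_atTop 1] with N hN
  have hN0 : (N:ℝ) ≠ 0 := by positivity
  simp only [one_pow, Finset.sum_const, Finset.card_range, nsmul_eq_mul, mul_one]
  rw [Complex.real_smul]
  push_cast
  rw [inv_mul_cancel₀ (by exact_mod_cast hN0)]

theorem limit_forces_zero_iff (d : ℕ) (z : Fin d → ℂ) (hz : ∀ j, ‖z j‖ = 1) :
    (∀ c : Fin d → ℂ,
        (∃ l : ℂ, Filter.Tendsto (fun n : ℕ => ∑ j, c j * z j ^ n) Filter.atTop (nhds l)) →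
        ∀ j, c j = 0)
    ↔ (∀ j, z j ≠ 1 ∧ ∀ k, k ≠ j → z j ≠ z k) := by
  constructor
  · intro H j
    constructor
    · intro hj1
      have := H (fun i => if i = j then 1 else 0)
        ⟨1, by
          apply Tendsto.congr' _ (tendsto_const_nhds (x := (1:ℂ)))
          filter_upwards with n
          rw [Finset.sum_eq_single j]
          · simp [hj1]
          · intro b _ hb; simp [hb]
          · simp⟩ j
      simp at this
    · intro k hk hjk
      have := H (fun i => if i = j then 1 else if i = k then -1 else 0)
        ⟨0, by
          apply Tendsto.congr' _ (tendsto_const_nhds (x := (0:ℂ)))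
          filter_upwards with n
          have : (fun i => (if i = j then (1:ℂ) else if i = k then -1 else 0) * z i ^ n) =
              fun i => (if i = j then z j ^ n else 0) + (if i = k then -z k ^ n else 0) := by
            funext i
            by_cases h1 : i = j
            · subst h1; simp [Ne.symm hk]
            · by_cases h2 : i = k <;> simp [h1, h2, hk]
          rw [this, Finset.sum_add_distrib, Finset.sum_ite_eq' , Finset.sum_ite_eq']
          simp [hjk]⟩ j
      simp at this
  · intro H c ⟨l, hl⟩ k
    set a : ℕ → ℂ := fun n => ∑ j, c j * z j ^ n with ha
    have hzk0 : z k ≠ 0 := by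
      intro h; have := hz k; rw [h] at this; simp at this
    set w : ℂ := (z k)⁻¹ with hw
    have hwabs : ‖w‖ = 1 := by rw [hw, norm_inv, hz k, inv_one]
    have hw1 : w ≠ 1 := by
      rw [hw, Ne, inv_eq_one]; exact (H k).1
    set T : ℕ → ℂ := fun N => (N : ℝ)⁻¹ • ∑ n ∈ Finset.range N, a n * w ^ n with hT
    -- Limit 1 : T → 0
    have lim0 : Tendsto T atTop (nhds 0) := by
      have hsplit : T = fun N : ℕ => l * ((N:ℝ)⁻¹ • ∑ n ∈ Finset.range N, w ^ n)
          + (N:ℝ)⁻¹ • ∑ n ∈ Finset.range N, (a n - l) * w ^ n := by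
        funext N
        rw [hT]
        simp only [Complex.real_smul, Finset.mul_sum, ← Finset.sum_add_distrib]
        apply Finset.sum_congr rfl
        intro n _
        ring
      rw [hsplit]
      have h1 : Tendsto (fun N : ℕ => l * ((N:ℝ)⁻¹ • ∑ n ∈ Finset.range N, w ^ n))
          atTop (nhds 0) := by
        simpa using (tendsto_const_nhds (x := l)).mul (avg_geom_zero w hwabs hw1)
      have h2 : Tendsto (fun n : ℕ => (a n - l) * w ^ n) atTop (nhds 0) := by
        apply squeeze_zero_norm (a := fun n => ‖a n - l‖)
        · intro n
          rw [norm_mul, norm_pow]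
          simp [show ‖w‖ = 1 from hwabs]
        · rw [← norm_zero (E := ℂ)]
          exact (Tendsto.norm (by simpa using hl.sub_const l))
      have h2' := h2.cesaro_smul
      simpa using h1.add h2'
    -- Limit 2 : T → c k
    have lim1 : Tendsto T atTop (nhds (c k)) := by
      have hswap : T = fun N : ℕ => ∑ j, c j * ((N:ℝ)⁻¹ • ∑ n ∈ Finset.range N, (z j * w) ^ n) := by
        funext N
        rw [hT, ha]
        simp only [Complex.real_smul, Finset.mul_sum, Finset.sum_mul]
        rw [Finset.sum_comm]
        apply Finset.sum_congr rfl
        intro j _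
        apply Finset.sum_congr rfl
        intro n _
        rw [mul_pow]
        ring
      rw [hswap]
      have : Tendsto (fun N : ℕ => ∑ j, c j * ((N:ℝ)⁻¹ • ∑ n ∈ Finset.range N, (z j * w) ^ n))
          atTop (nhds (∑ j, c j * (if j = k then 1 else 0))) := by
        apply tendsto_finset_sum
        intro j _
        by_cases hjk : j = k
        · subst hjk
          simp only [if_pos rfl]
          have hzw : z j * w = 1 := by rw [hw, mul_inv_cancel₀ hzk0]
          rw [hzw]
          exact (tendsto_const_nhds (x := c j)).mul avg_geom_one
        · simp only [if_neg hjk]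
          have habs : ‖z j * w‖ = 1 := by
            rw [norm_mul, hz j, hwabs, one_mul]
          have hne1 : z j * w ≠ 1 := by
            intro h
            apply (H j).2 k (Ne.symm hjk)
            field_simp [hw] at h
            rw [hw, mul_inv_eq_one₀ hzk0] at h
            exact h
          have := (tendsto_const_nhds (x := c j)).mul (avg_geom_zero _ habs hne1)
          simpa using this
      simpa [Finset.sum_ite_eq'] using this
    have := tendsto_nhds_unique lim1 lim0
    exact this
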